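/- If C^G is an [n, N^G] systematic linear code with minimum distance d^G and C^B is an (n, N^B, k, N^B) systematic primitive multiset batch code (both over the same field, with the message in the first n coordinates), then the code C that maps x to the concatenation of x, the parity symbols of C^B(x), and the parity symbols of C^G(x), is an (n, N^B + N^G − n, k, N^B + N^G − n) primitive multiset batch code with minimum distance at least d^G. -/

import Mathlib

/-- `C : (μ → F) → ι → F` is a primitive multiset batch code supporting `k` parallel
reads: each code symbol is its own bucket, and any multiset of `k` read requests for
message symbols can be served from pairwise disjoint sets of code symbols. -/
def IsPrimitiveMultisetBatchCode (F : Type*) {μ ι : Type*} (k : ℕ)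
    (C : (μ → F) → ι → F) : Prop :=
  ∀ req : Fin k → μ, ∃ S : Fin k → Set ι,
    (∀ i j : Fin k, i ≠ j → Disjoint (S i) (S j)) ∧
    ∀ j : Fin k, ∃ dec : (S j → F) → F,
      ∀ x : μ → F, dec (fun b => C x b.1) = x (req j)

/-- Composing a systematic primitive multiset batch code (parity part `PB`) with a
systematic linear code of minimum distance at least `dG` (parity part `PG`) by
concatenating the message with both parity parts yields a primitive multiset batch
code with minimum distance at least `dG`. -/
theorem stmt_12 {F : Type*} [Field F] (n pB pG k dG : ℕ)
    (PB : (Fin n → F) → Fin pB → F)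
    (PG : (Fin n → F) →ₗ[F] (Fin pG → F))
    (hB : IsPrimitiveMultisetBatchCode F k
      (fun x : Fin n → F => Sum.elim x (PB x)))
    (hdG : ∀ x y : Fin n → F, x ≠ y →
      dG ≤ Set.ncard {i : Fin n ⊕ Fin pG |
        Sum.elim x (PG x) i ≠ Sum.elim y (PG y) i}) :
    IsPrimitiveMultisetBatchCode F k
      (fun x : Fin n → F => Sum.elim x (Sum.elim (PB x) (PG x))) ∧
    ∀ x y : Fin n → F, x ≠ y →
      dG ≤ Set.ncard {i : Fin n ⊕ (Fin pB ⊕ Fin pG) |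
        Sum.elim x (Sum.elim (PB x) (PG x)) i ≠
        Sum.elim y (Sum.elim (PB y) (PG y)) i} := by
  constructor
  · intro req
    obtain ⟨S, hdisj, hdec⟩ := hB req
    set e : Fin n ⊕ Fin pB → Fin n ⊕ (Fin pB ⊕ Fin pG) := Sum.map id Sum.inl with he
    have hinj : Function.Injective e :=
      Function.Injective.sumMap Function.injective_id Sum.inl_injective
    refine ⟨fun j => e '' S j, ?_, ?_⟩
    · intro i j hij
      exact (Set.disjoint_image_iff hinj).2 (hdisj i j hij)
    · intro j
      obtain ⟨dec, hd⟩ := hdec j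
      refine ⟨fun f => dec (fun b => f ⟨e b.1, Set.mem_image_of_mem e b.2⟩), ?_⟩
      intro x
      have : (fun b : S j =>
          Sum.elim x (Sum.elim (PB x) (PG x)) (e b.1)) =
          fun b : S j => Sum.elim x (PB x) b.1 := by
        funext b
        cases b.1 <;> rfl
      show dec (fun b : S j =>
          Sum.elim x (Sum.elim (PB x) (PG x)) (e b.1)) = x (req j)
      rw [this]; exact hd x
  · intro x y hxy
    set e2 : Fin n ⊕ Fin pG → Fin n ⊕ (Fin pB ⊕ Fin pG) := Sum.map id Sum.inr with he2
    have hinj : Function.Injective e2 :=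
      Function.Injective.sumMap Function.injective_id Sum.inr_injective
    have hsub : e2 '' {i : Fin n ⊕ Fin pG |
        Sum.elim x (PG x) i ≠ Sum.elim y (PG y) i} ⊆
        {i : Fin n ⊕ (Fin pB ⊕ Fin pG) |
          Sum.elim x (Sum.elim (PB x) (PG x)) i ≠
          Sum.elim y (Sum.elim (PB y) (PG y)) i} := by
      rintro _ ⟨i, hi, rfl⟩
      cases i <;> exact hi
    calc dG ≤ Set.ncard {i : Fin n ⊕ Fin pG |
          Sum.elim x (PG x) i ≠ Sum.elim y (PG y) i} := hdG x y hxy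
      _ = Set.ncard (e2 '' {i : Fin n ⊕ Fin pG |
          Sum.elim x (PG x) i ≠ Sum.elim y (PG y) i}) :=
          (Set.ncard_image_of_injective _ hinj).symm
      _ ≤ _ := Set.ncard_le_ncard hsub (Set.toFinite _)
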